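/- Let φ = (1+√5)/2 be the golden ratio, and let A_0, A_1, B be d×d complex matrices with A_n = B A_{n−1} A_{n−2} for n ≥ 2. If ‖B‖^φ · ‖A_0‖^{1/φ} · ‖A_1‖ < 1 for some submultiplicative matrix norm ‖·‖, then A_n converges to the zero matrix. -/

import Mathlib

open Filter

private def Mnu (d : ℕ) : Type := Matrix (Fin d) (Fin d) ℂ
noncomputable instance (d : ℕ) : AddCommGroup (Mnu d) :=
  inferInstanceAs (AddCommGroup (Matrix (Fin d) (Fin d) ℂ))
noncomputable instance (d : ℕ) : Module ℂ (Mnu d) :=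
  inferInstanceAs (Module ℂ (Matrix (Fin d) (Fin d) ℂ))
instance (d : ℕ) : FiniteDimensional ℂ (Mnu d) :=
  inferInstanceAs (FiniteDimensional ℂ (Matrix (Fin d) (Fin d) ℂ))

private lemma tendsto_of_nu (d : ℕ) (ν : Matrix (Fin d) (Fin d) ℂ → ℝ)
    (hνadd : ∀ X Y, ν (X + Y) ≤ ν X + ν Y)
    (hνsmul : ∀ (c : ℂ) (X), ν (c • X) = ‖c‖ * ν X)
    (hνeq : ∀ X, ν X = 0 ↔ X = 0)
    (A : ℕ → Matrix (Fin d) (Fin d) ℂ)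
    (h : Tendsto (fun n => ν (A n)) atTop (nhds 0)) :
    Tendsto A atTop (nhds 0) := by
  letI : NormedAddCommGroup (Mnu d) := AddGroupNorm.toNormedAddCommGroup
    { toFun := ν
      map_zero' := (hνeq 0).2 rfl
      add_le' := hνadd
      neg' := fun x => by
        have := hνsmul (-1) x
        have h2 : ν ((-1 : ℂ) • x) = ν (-x) := congrArg ν (neg_one_smul ℂ x)
        exact h2.symm.trans (this.trans (by simp))
      eq_zero_of_map_eq_zero' := fun x hx => (hνeq x).1 hx }
  letI : NormedSpace ℂ (Mnu d) := ⟨fun c x => le_of_eq (hνsmul c x)⟩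
  let A' : ℕ → Mnu d := fun n => A n
  let f : Mnu d →ₗ[ℂ] Matrix (Fin d) (Fin d) ℂ :=
    { toFun := fun x => x, map_add' := fun _ _ => rfl, map_smul' := fun _ _ => rfl }
  have hf : Continuous f := f.continuous_of_finiteDimensional
  have h0 : Tendsto A' atTop (nhds (0 : Mnu d)) :=
    tendsto_zero_iff_norm_tendsto_zero.2 h
  exact (hf.tendsto 0).comp h0

theorem stmt_10 (d : ℕ)
    (φ : ℝ) (hφ : φ = (1 + Real.sqrt 5) / 2)
    (ν : Matrix (Fin d) (Fin d) ℂ → ℝ)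
    (hν0 : ∀ X, 0 ≤ ν X)
    (hνadd : ∀ X Y, ν (X + Y) ≤ ν X + ν Y)
    (hνsmul : ∀ (c : ℂ) (X), ν (c • X) = ‖c‖ * ν X)
    (hνeq : ∀ X, ν X = 0 ↔ X = 0)
    (hνmul : ∀ X Y, ν (X * Y) ≤ ν X * ν Y)
    (B : Matrix (Fin d) (Fin d) ℂ)
    (A : ℕ → Matrix (Fin d) (Fin d) ℂ)
    (hA : ∀ n ≥ 2, A n = B * A (n - 1) * A (n - 2))
    (hcond : ν B ^ φ * ν (A 0) ^ (1 / φ) * ν (A 1) < 1) :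
    Filter.Tendsto A Filter.atTop (nhds 0) := by
  have hev : ∀ k : ℕ, (∀ n ≥ k, A n = 0) → Tendsto A atTop (nhds 0) := by
    intro k hk
    refine Tendsto.congr' ?_ (tendsto_const_nhds (x := (0 : Matrix (Fin d) (Fin d) ℂ)))
    exact eventually_atTop.2 ⟨k, fun n hn => (hk n hn).symm⟩
  have hA' : ∀ n : ℕ, A (n + 2) = B * A (n + 1) * A n := by
    intro n
    have h := hA (n + 2) (by omega)
    have h1 : n + 2 - 1 = n + 1 := by omega
    have h2 : n + 2 - 2 = n := by omega
    rw [h1, h2] at h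
    exact h
  -- degenerate case: some norm is zero
  by_cases hB0 : ν B = 0
  · refine hev 2 fun n hn => ?_
    rw [hA n hn, (hνeq B).1 hB0, Matrix.zero_mul, Matrix.zero_mul]
  by_cases hAz : ∃ k, ν (A k) = 0
  · obtain ⟨k, hk⟩ := hAz
    have hk0 : A k = 0 := (hνeq _).1 hk
    have key : ∀ m : ℕ, A (k + 2 + m) = 0 ∧ A (k + 3 + m) = 0 := by
      intro m
      induction m with
      | zero =>
        have e2 : A (k + 2) = 0 := by
          rw [hA' k, hk0, Matrix.mul_zero]
        have e3 : A (k + 3) = 0 := by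
          have := hA' (k + 1)
          rw [show k + 1 + 2 = k + 3 by omega, show k + 1 + 1 = k + 2 by omega] at this
          rw [this, e2, Matrix.mul_zero, Matrix.zero_mul]
        exact ⟨e2, e3⟩
      | succ m ih =>
        refine ⟨by rw [show k + 2 + (m + 1) = k + 3 + m by omega]; exact ih.2, ?_⟩
        have := hA' (k + 2 + m)
        rw [show k + 2 + m + 2 = k + 3 + (m + 1) by omega] at this
        rw [this, ih.1, Matrix.mul_zero]
    refine hev (k + 2) fun n hn => ?_
    obtain ⟨m, rfl⟩ := Nat.exists_eq_add_of_le hn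
    exact (key m).1
  push_neg at hAz
  -- positive case
  have hb : 0 < ν B := lt_of_le_of_ne (hν0 B) (Ne.symm hB0)
  have ha : ∀ n, 0 < ν (A n) := fun n => lt_of_le_of_ne (hν0 _) (Ne.symm (hAz n))
  have hg2 : φ ^ 2 = φ + 1 := by rw [hφ]; exact Real.goldenRatio_sq
  have hgpos : (0:ℝ) < φ := by rw [hφ]; exact Real.goldenRatio_pos
  have hg1 : (1:ℝ) < φ := by rw [hφ]; exact Real.one_lt_goldenRatio
  have hgne : φ ≠ 0 := ne_of_gt hgpos
  have hfibeq : ∀ n : ℕ, (Nat.fib n : ℝ) = (φ ^ n - Real.goldenConj ^ n) / Real.sqrt 5 := by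
    intro n; rw [hφ]; exact Real.coe_fib_eq n
  have hrec : ∀ n, ν (A (n + 2)) ≤ ν B * ν (A (n + 1)) * ν (A n) := by
    intro n
    rw [hA' n]
    calc ν (B * A (n + 1) * A n) ≤ ν (B * A (n + 1)) * ν (A n) := hνmul _ _
      _ ≤ ν B * ν (A (n + 1)) * ν (A n) :=
        mul_le_mul_of_nonneg_right (hνmul _ _) (hν0 _)
  set γ : ℕ → ℝ := fun n => Real.log (ν B * ν (A n)) with hγdef
  have hγn : ∀ n, γ n = Real.log (ν B) + Real.log (ν (A n)) := fun n =>
    Real.log_mul (ne_of_gt hb) (ne_of_gt (ha n))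
  have hγrec : ∀ n, γ (n + 2) ≤ γ (n + 1) + γ n := by
    intro n
    have h1 : (0:ℝ) < ν B * ν (A (n + 1)) := mul_pos hb (ha _)
    have h2 : (0:ℝ) < ν B * ν (A n) := mul_pos hb (ha _)
    rw [hγdef]
    simp only
    rw [← Real.log_mul (ne_of_gt h1) (ne_of_gt h2)]
    apply Real.log_le_log (mul_pos hb (ha _))
    calc ν B * ν (A (n + 2)) ≤ ν B * (ν B * ν (A (n + 1)) * ν (A n)) :=
          mul_le_mul_of_nonneg_left (hrec n) hb.le
      _ = ν B * ν (A (n + 1)) * (ν B * ν (A n)) := by ring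
  have hfib : ∀ n, γ (n + 1) ≤ (Nat.fib (n + 1) : ℝ) * γ 1 + (Nat.fib n : ℝ) * γ 0 ∧
      γ (n + 2) ≤ (Nat.fib (n + 2) : ℝ) * γ 1 + (Nat.fib (n + 1) : ℝ) * γ 0 := by
    intro n
    induction n with
    | zero =>
      constructor
      · simp
      · have := hγrec 0
        simpa [Nat.fib] using this
    | succ n ih =>
      refine ⟨ih.2, ?_⟩
      have h1 := hγrec (n + 1)
      have h2 := add_le_add ih.2 ih.1
      have h3 : (Nat.fib (n + 3) : ℝ) = (Nat.fib (n + 2) : ℝ) + (Nat.fib (n + 1) : ℝ) := by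
        rw [show n + 3 = (n + 1) + 2 by omega, Nat.fib_add_two]
        push_cast
        ring
      have h4 : (Nat.fib (n + 2) : ℝ) = (Nat.fib (n + 1) : ℝ) + (Nat.fib n : ℝ) := by
        rw [Nat.fib_add_two]
        push_cast
        ring
      calc γ (n + 3) ≤ γ (n + 2) + γ (n + 1) := h1
        _ ≤ (Nat.fib (n + 2) : ℝ) * γ 1 + (Nat.fib (n + 1) : ℝ) * γ 0 +
            ((Nat.fib (n + 1) : ℝ) * γ 1 + (Nat.fib n : ℝ) * γ 0) := h2
        _ = (Nat.fib (n + 3) : ℝ) * γ 1 + (Nat.fib (n + 2) : ℝ) * γ 0 := by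
            rw [h3, h4]; ring
  -- the key negativity
  set K1 : ℝ := φ * γ 1 + γ 0 with hK1def
  set K2 : ℝ := Real.goldenConj * γ 1 + γ 0 with hK2def
  have hL : Real.log (ν B ^ φ * ν (A 0) ^ (1 / φ) * ν (A 1)) < 0 :=
    Real.log_neg (mul_pos (mul_pos (Real.rpow_pos_of_pos hb _) (Real.rpow_pos_of_pos (ha 0) _)) (ha 1)) hcond
  have hLeq : Real.log (ν B ^ φ * ν (A 0) ^ (1 / φ) * ν (A 1)) =
      φ * Real.log (ν B) + (1 / φ) * Real.log (ν (A 0)) +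
      Real.log (ν (A 1)) := by
    rw [Real.log_mul (ne_of_gt (mul_pos (Real.rpow_pos_of_pos hb _) (Real.rpow_pos_of_pos (ha 0) _))) (ne_of_gt (ha 1)),
      Real.log_mul (ne_of_gt (Real.rpow_pos_of_pos hb _)) (ne_of_gt (Real.rpow_pos_of_pos (ha 0) _)),
      Real.log_rpow hb, Real.log_rpow (ha 0)]
  have hK1eq : K1 = φ *
      Real.log (ν B ^ φ * ν (A 0) ^ (1 / φ) * ν (A 1)) := by
    rw [hLeq, hK1def, hγn 1, hγn 0]
    field_simp
    linear_combination (-(Real.log (ν B))) * hg2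
  have hK1neg : K1 < 0 := by
    rw [hK1eq]
    exact mul_neg_of_pos_of_neg hgpos hL
  -- tendsto atBot
  have habsψ : |Real.goldenConj| < 1 :=
    abs_lt.2 ⟨Real.neg_one_lt_goldenConj, lt_trans Real.goldenConj_neg one_pos⟩
  have T1 : Tendsto (fun n : ℕ => φ ^ n * K1) atTop atBot :=
    (tendsto_pow_atTop_atTop_of_one_lt hg1).atTop_mul_const_of_neg hK1neg
  have T2 : Tendsto (fun n : ℕ => -(Real.goldenConj ^ n * K2)) atTop (nhds 0) := by
    have := (tendsto_pow_atTop_nhds_zero_of_abs_lt_one habsψ).mul_const K2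
    simpa using this.neg
  have T3 : Tendsto (fun n : ℕ => (φ ^ n * K1 - Real.goldenConj ^ n * K2) / Real.sqrt 5)
      atTop atBot := by
    have := (T2.add_atBot T1).atBot_div_const (by positivity : (0:ℝ) < Real.sqrt 5)
    refine this.congr fun n => ?_
    ring
  have hub : ∀ n, γ (n + 1) ≤
      (φ ^ n * K1 - Real.goldenConj ^ n * K2) / Real.sqrt 5 := by
    intro n
    refine le_trans (hfib n).1 (le_of_eq ?_)
    rw [hfibeq, hfibeq, hK1def, hK2def]
    ring
  have T4 : Tendsto (fun n : ℕ => γ (n + 1)) atTop atBot := tendsto_atBot_mono hub T3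
  have T5 : Tendsto γ atTop atBot := (tendsto_add_atTop_iff_nat 1).1 T4
  have T6 : Tendsto (fun n => Real.log (ν (A n))) atTop atBot := by
    have := tendsto_atBot_add_const_right atTop (-(Real.log (ν B))) T5
    refine this.congr fun n => ?_
    rw [hγn n]; ring
  have T7 : Tendsto (fun n => ν (A n)) atTop (nhds 0) := by
    have := Real.tendsto_exp_atBot.comp T6
    refine this.congr fun n => ?_
    exact Real.exp_log (ha n)
  exact tendsto_of_nu d ν hνadd hνsmul hνeq A T7
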